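/- For every c with 0 < c < 1 there exist a positive integer s and a real α < 1 such that for all x⃗, y⃗ ∈ D, ρ(Ψ_c^s(x⃗), Ψ_c^s(y⃗)) ≤ α · ρ(x⃗, y⃗), where ρ is the Euclidean metric on ℝ^m and Ψ_c^s is the s-fold iterate of Ψ_c. In fact one may take any s with 2·c^s·√m < 1 and α = 2·c^s·√m. -/

import Mathlib

open FirstOrder MeasureTheory
open scoped Classical

/-! ### Rooted trees -/

/-- A rooted tree: a set of finite sequences of naturals (addresses of vertices),
containing the root `[]` and closed under passing to the parent (`List.dropLast`). -/
structure RTree where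
  carrier : Set (List ℕ)
  root_mem : [] ∈ carrier
  dropLast_mem : ∀ v ∈ carrier, v.dropLast ∈ carrier

namespace RTree

/-- The first-order language of rooted trees: a constant symbol `R` (the root) and a
unary function symbol `π` (the parent function). -/
def treeLang : FirstOrder.Language where
  Functions := fun n => match n with
    | 0 => Unit
    | 1 => Unit
    | _ => Empty
  Relations := fun _ => Empty

/-- The type of vertices of a rooted tree. -/
def V (T : RTree) : Type := {v : List ℕ // v ∈ T.carrier}

/-- The root, as a vertex. -/
def rootV (T : RTree) : T.V := ⟨[], T.root_mem⟩

/-- The parent of a vertex (the root is its own parent). -/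
def parentV (T : RTree) (v : T.V) : T.V := ⟨v.1.dropLast, T.dropLast_mem _ v.2⟩

/-- A rooted tree as a structure for the language of rooted trees: the constant is
interpreted as the root and the unary function as the parent function (fixing the
root, where the parent is undefined). -/
noncomputable instance treeStructure (T : RTree) : treeLang.Structure T.V where
  funMap {n} f x :=
    match n, f, x with
    | 0, _, _ => rootV T
    | 1, _, x => parentV T (x 0)
  RelMap {n} r := nomatch r

end RTree

namespace FirstOrder.Language

/-- The quantifier depth of a first-order formula: the depth of nesting of its
quantifiers. -/
def BoundedFormula.qdepth {L : FirstOrder.Language} {α : Type*} :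
    ∀ {n}, L.BoundedFormula α n → ℕ
  | _, .falsum => 0
  | _, .equal _ _ => 0
  | _, .rel _ _ => 0
  | _, .imp f g => max f.qdepth g.qdepth
  | _, .all f => f.qdepth + 1

end FirstOrder.Language

namespace RTree

/-- Two rooted trees are `≡ₖ`-equivalent if they agree on all first-order sentences of
quantifier depth at most `k`. -/
def TreeEquiv (k : ℕ) (T T' : RTree) : Prop :=
  ∀ A : treeLang.Sentence, A.qdepth ≤ k → (T.V ⊨ A ↔ T'.V ⊨ A)

/-- `≡ₖ` as an equivalence relation (setoid) on rooted trees. -/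
def treeSetoid (k : ℕ) : Setoid RTree where
  r := TreeEquiv k
  iseqv := ⟨fun _ _ _ => Iff.rfl, fun h A hA => (h A hA).symm,
    fun h h' A hA => (h A hA).trans (h' A hA)⟩

/-- `Σₖ`: the set of `≡ₖ`-equivalence classes of rooted trees. -/
def TreeClass (k : ℕ) : Type := Quotient (treeSetoid k)

/-- The Ehrenfeucht value of a rooted tree: its `≡ₖ`-equivalence class. -/
def EV (k : ℕ) (T : RTree) : TreeClass k := Quotient.mk (treeSetoid k) T

/-- `T(v)`: the subtree of `T` consisting of `v` and all its descendants, rooted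
at `v`. -/
def subtreeAt (T : RTree) (v : List ℕ) (hv : v ∈ T.carrier) : RTree where
  carrier := {w | v ++ w ∈ T.carrier}
  root_mem := by simpa using hv
  dropLast_mem := fun w hw => by
    rcases eq_or_ne w [] with h | h
    · subst h; simpa using hv
    · have h2 := T.dropLast_mem _ hw
      rwa [List.dropLast_append_of_ne_nil h] at h2

/-- The number of elements of `S`, truncated at `k` (so the value `k` means
"at least `k`", i.e. `ω`). -/
noncomputable def truncCount (k : ℕ) (S : Set ℕ) : ℕ := (min (k : ℕ∞) S.encard).toNat

/-- The truncated number of rootchildren `v` of `T` with `EV[T(v)] = j`; a value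
`< k` is the exact count, while the value `k` stands for `ω`, i.e. "at least `k`". -/
noncomputable def childClassCount (k : ℕ) (T : RTree) (j : TreeClass k) : ℕ :=
  truncCount k {i : ℕ | ∃ h : [i] ∈ T.carrier, EV k (T.subtreeAt [i] h) = j}

end RTree
namespace RTree

/-- Join a collection of rooted trees below a common new root. -/
def joinTree (f : ℕ → Option RTree) : RTree where
  carrier := {[]} ∪ {l | ∃ i T w, f i = some T ∧ w ∈ T.carrier ∧ l = i :: w}
  root_mem := Or.inl rfl
  dropLast_mem := by
    rintro v (rfl | ⟨i, T, w, hf, hw, rfl⟩)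
    · exact Or.inl rfl
    · cases w with
      | nil => exact Or.inl (by simp)
      | cons a as =>
        exact Or.inr ⟨i, T, (a :: as).dropLast, hf, T.dropLast_mem _ hw, rfl⟩

/-- The recursion function `Γ`: given truncated counts `a j` of rootchildren of each
Ehrenfeucht class `j` (counts `≥ k` being identified with `ω`), it returns the
Ehrenfeucht value of any (equivalently, of a canonical) tree whose root has, for each
`j`, `a j` rootchildren whose subtrees lie in class `j`. -/
noncomputable def recursionFun (k : ℕ) [Fintype (TreeClass k)]
    (a : TreeClass k → ℕ) : TreeClass k :=
  EV k (joinTree (fun n =>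
    if h : n.unpair.1 < Fintype.card (TreeClass k) then
      if n.unpair.2 < min (a ((Fintype.equivFin (TreeClass k)).symm ⟨n.unpair.1, h⟩)) k then
        some (Quotient.out ((Fintype.equivFin (TreeClass k)).symm ⟨n.unpair.1, h⟩))
      else none
    else none))

/-- `P[n = u]` for `n` a `Poisson(lam)` variable truncated at `ω = k`: for `u < k` this
is `e^{-lam} lam^u / u!`, and for `u = k` (representing `ω`) it is the remaining mass
`1 - Σ_{v<k} e^{-lam} lam^v / v!`. -/
noncomputable def poisTrunc (lam : ℝ) (k : ℕ) (u : ℕ) : ℝ :=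
  if u < k then Real.exp (-lam) * lam ^ u / u.factorial
  else 1 - ∑ v ∈ Finset.range k, Real.exp (-lam) * lam ^ v / v.factorial

/-- The map `Ψ_c : D → D`: the root is given a `Poisson(c)` number of children, each
child independently receives a class `j` with probability `x j`; the (truncated) counts
`n_j` are then independent (truncated) `Poisson(c x_j)` variables, and `Ψ_c(x) j` is the
probability that `Γ(n⃗) = j`. -/
noncomputable def PsiMap (k : ℕ) [Fintype (TreeClass k)] (c : ℝ)
    (x : TreeClass k → ℝ) : TreeClass k → ℝ := fun j =>
  ∑ a : TreeClass k → Fin (k + 1),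
    (if recursionFun k (fun i => (a i : ℕ)) = j then ∏ i, poisTrunc (c * x i) k (a i)
     else 0)

/-- `D`: the simplex of probability distributions over `Σₖ`. -/
def simplexD (k : ℕ) [Fintype (TreeClass k)] : Set (TreeClass k → ℝ) :=
  {x | (∀ j, 0 ≤ x j) ∧ ∑ j, x j = 1}

/-- The total variation distance `TV(x,y) = (1/2) Σ_j |x_j - y_j|`. -/
noncomputable def tvDist {ι : Type*} [Fintype ι] (x y : ι → ℝ) : ℝ :=
  (∑ j, |x j - y j|) / 2

/-- The Euclidean metric `ρ` on `ℝ^m`. -/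
noncomputable def euclDist {ι : Type*} [Fintype ι] (x y : ι → ℝ) : ℝ :=
  Real.sqrt (∑ j, (x j - y j) ^ 2)

end RTree
namespace RTree


/-! ### Auxiliary lemmas for the contraction theorem -/

/-- The Poisson point mass `e^{-λ} λ^u / u!`. -/
noncomputable def poisTerm (lam : ℝ) (u : ℕ) : ℝ :=
  Real.exp (-lam) * lam ^ u / u.factorial

lemma poisTrunc_eq (lam : ℝ) (k u : ℕ) :
    poisTrunc lam k u = if u < k then poisTerm lam u
      else 1 - ∑ v ∈ Finset.range k, poisTerm lam v := rfl

/-- `q = p' + p` where `p` is the truncated Poisson pmf as a function of the parameter. -/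
noncomputable def poisQ (lam : ℝ) (k u : ℕ) : ℝ :=
  if u = 0 then 0
  else if u < k then poisTerm lam (u - 1)
  else poisTerm lam (k - 1) + poisTrunc lam k k

lemma poisTerm_nonneg {lam : ℝ} (hl : 0 ≤ lam) (u : ℕ) : 0 ≤ poisTerm lam u := by
  unfold poisTerm; positivity

lemma hasDerivAt_poisTerm (u : ℕ) (lam : ℝ) :
    HasDerivAt (fun l => poisTerm l u)
      ((if u = 0 then 0 else poisTerm lam (u - 1)) - poisTerm lam u) lam := by
  have h1 : HasDerivAt (fun l : ℝ => Real.exp (-l)) (-Real.exp (-lam)) lam := by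
    simpa using ((hasDerivAt_id lam).neg).exp
  have h2 : HasDerivAt (fun l : ℝ => l ^ u) (u * lam ^ (u - 1)) lam := hasDerivAt_pow u lam
  have h3 : HasDerivAt (fun l => poisTerm l u)
      (((-Real.exp (-lam)) * lam ^ u + Real.exp (-lam) * ((u : ℝ) * lam ^ (u - 1))) /
        (u.factorial : ℝ)) lam := (h1.mul h2).div_const _
  convert h3 using 1
  cases u with
  | zero => simp [poisTerm]
  | succ v =>
    have h0 : (v.factorial : ℝ) ≠ 0 := by
      exact_mod_cast v.factorial_ne_zero
    have h0' : ((v : ℝ) + 1) ≠ 0 := by positivity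
    simp only [poisTerm, Nat.succ_ne_zero, if_false, Nat.succ_sub_one, Nat.factorial_succ]
    push_cast
    field_simp
    ring

lemma hasDerivAt_poisTrunc (k : ℕ) (hk : 0 < k) (u : ℕ) (lam : ℝ) :
    HasDerivAt (fun l => poisTrunc l k u) (poisQ lam k u - poisTrunc lam k u) lam := by
  by_cases hu : u < k
  · have h : HasDerivAt (fun l => poisTrunc l k u)
        ((if u = 0 then 0 else poisTerm lam (u - 1)) - poisTerm lam u) lam := by
      simp only [poisTrunc_eq, hu, if_true]
      exact hasDerivAt_poisTerm u lam
    convert h using 1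
    rw [poisTrunc_eq, if_pos hu]
    rcases Nat.eq_zero_or_pos u with h0 | h0
    · simp [poisQ, h0]
    · simp [poisQ, Nat.pos_iff_ne_zero.mp h0, hu]
  · obtain ⟨n, rfl⟩ : ∃ n, k = n + 1 := ⟨k - 1, (Nat.succ_pred_eq_of_pos hk).symm⟩
    have hder : HasDerivAt (fun l => 1 - ∑ v ∈ Finset.range (n + 1), poisTerm l v)
        (0 - ∑ v ∈ Finset.range (n + 1),
          ((if v = 0 then 0 else poisTerm lam (v - 1)) - poisTerm lam v)) lam :=
      (hasDerivAt_const lam 1).sub (HasDerivAt.fun_sum fun v _ => hasDerivAt_poisTerm v lam)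
    have hfun : (fun l => poisTrunc l (n + 1) u) =
        fun l => 1 - ∑ v ∈ Finset.range (n + 1), poisTerm l v := by
      funext l; rw [poisTrunc_eq, if_neg hu]
    rw [hfun]
    convert hder using 1
    have hQ : poisQ lam (n + 1) u = poisTerm lam n + poisTrunc lam (n + 1) (n + 1) := by
      have hu0 : u ≠ 0 := by omega
      simp [poisQ, hu0, hu]
    have hP : poisTrunc lam (n + 1) u = poisTrunc lam (n + 1) (n + 1) := by
      rw [poisTrunc_eq, poisTrunc_eq, if_neg hu, if_neg (lt_irrefl _)]
    have hsum : ∑ v ∈ Finset.range (n + 1),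
        ((if v = 0 then (0 : ℝ) else poisTerm lam (v - 1)) - poisTerm lam v)
        = - poisTerm lam n := by
      rw [Finset.sum_sub_distrib,
        Finset.sum_range_succ' (fun v => if v = 0 then (0 : ℝ) else poisTerm lam (v - 1)) n,
        Finset.sum_range_succ (fun v => poisTerm lam v) n]
      simp
    rw [hQ, hP, hsum]
    ring

lemma sum_range_poisTerm_le_one {lam : ℝ} (hl : 0 ≤ lam) (k : ℕ) :
    ∑ v ∈ Finset.range k, poisTerm lam v ≤ 1 := by
  have h := Real.sum_le_exp_of_nonneg hl k
  calc ∑ v ∈ Finset.range k, poisTerm lam v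
      = Real.exp (-lam) * ∑ v ∈ Finset.range k, lam ^ v / v.factorial := by
        rw [Finset.mul_sum]
        exact Finset.sum_congr rfl fun v _ => by unfold poisTerm; ring
    _ ≤ Real.exp (-lam) * Real.exp lam := by
        exact mul_le_mul_of_nonneg_left h (Real.exp_nonneg _)
    _ = 1 := by rw [← Real.exp_add]; simp

lemma poisTrunc_nonneg {lam : ℝ} (hl : 0 ≤ lam) (k u : ℕ) : 0 ≤ poisTrunc lam k u := by
  rw [poisTrunc_eq]
  split
  · exact poisTerm_nonneg hl u
  · linarith [sum_range_poisTerm_le_one hl k]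

lemma poisQ_nonneg {lam : ℝ} (hl : 0 ≤ lam) (k u : ℕ) : 0 ≤ poisQ lam k u := by
  unfold poisQ
  split
  · exact le_refl 0
  · split
    · exact poisTerm_nonneg hl _
    · exact add_nonneg (poisTerm_nonneg hl _) (poisTrunc_nonneg hl k k)

lemma sum_poisTrunc (lam : ℝ) (k : ℕ) :
    ∑ u : Fin (k + 1), poisTrunc lam k (u : ℕ) = 1 := by
  rw [Fin.sum_univ_eq_sum_range (fun u => poisTrunc lam k u) (k + 1), Finset.sum_range_succ]
  have h1 : ∑ u ∈ Finset.range k, poisTrunc lam k u = ∑ u ∈ Finset.range k, poisTerm lam u :=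
    Finset.sum_congr rfl fun u hu => by rw [poisTrunc_eq, if_pos (Finset.mem_range.mp hu)]
  rw [h1, poisTrunc_eq, if_neg (lt_irrefl k)]
  ring

lemma sum_poisQ (lam : ℝ) {k : ℕ} (hk : 0 < k) :
    ∑ u : Fin (k + 1), poisQ lam k (u : ℕ) = 1 := by
  obtain ⟨n, rfl⟩ : ∃ n, k = n + 1 := ⟨k - 1, (Nat.succ_pred_eq_of_pos hk).symm⟩
  rw [Fin.sum_univ_eq_sum_range (fun u => poisQ lam (n + 1) u) (n + 2), Finset.sum_range_succ]
  have h1 : ∑ u ∈ Finset.range (n + 1), poisQ lam (n + 1) u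
      = ∑ u ∈ Finset.range n, poisTerm lam u := by
    rw [Finset.sum_range_succ' (fun u => poisQ lam (n + 1) u) n]
    have hc : ∀ i ∈ Finset.range n, poisQ lam (n + 1) (i + 1) = poisTerm lam i := by
      intro i hi
      have hi' : i + 1 < n + 1 := by
        have := Finset.mem_range.mp hi; omega
      simp [poisQ, hi']
    rw [Finset.sum_congr rfl hc]
    simp [poisQ]
  have h2 : poisQ lam (n + 1) (n + 1) = poisTerm lam n + poisTrunc lam (n + 1) (n + 1) := by
    simp [poisQ]
  rw [h1, h2, poisTrunc_eq, if_neg (lt_irrefl _), Finset.sum_range_succ]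
  ring

/-- **Core estimate**: the `ℓ¹` distance between products of truncated Poisson pmfs with
parameter vectors of equal total mass is at most the `ℓ¹` distance of the parameters. -/
lemma prod_poisTrunc_l1_le {ι : Type*} [Fintype ι] (k : ℕ) (hk : 0 < k)
    (lam mu : ι → ℝ) (hlam : ∀ i, 0 ≤ lam i) (hmu : ∀ i, 0 ≤ mu i)
    (hsum : ∑ i, lam i = ∑ i, mu i) :
    ∑ b : ι → Fin (k + 1),
        |(∏ i, poisTrunc (mu i) k (b i)) - ∏ i, poisTrunc (lam i) k (b i)|
      ≤ ∑ i, |mu i - lam i| := by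
  classical
  haveI : Fact ((1 : ENNReal) ≤ 1) := ⟨le_rfl⟩
  set L : ℝ → ι → ℝ := fun t i => lam i + t * (mu i - lam i) with hLdef
  have hL0 : L 0 = lam := by funext i; simp [hLdef]
  have hL1 : L 1 = mu := by funext i; simp [hLdef]
  have hLmem : ∀ t ∈ Set.Icc (0 : ℝ) 1, ∀ i, 0 ≤ L t i := by
    intro t ht i
    have h1 : 0 ≤ (1 - t) * lam i := mul_nonneg (by linarith [ht.2]) (hlam i)
    have h2 : 0 ≤ t * mu i := mul_nonneg ht.1 (hmu i)
    have he : L t i = (1 - t) * lam i + t * mu i := by simp only [hLdef]; ring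
    rw [he]; exact add_nonneg h1 h2
  set F : ℝ → PiLp 1 (fun _ : ι → Fin (k + 1) => ℝ) :=
    fun t => WithLp.toLp 1 (fun b => ∏ i, poisTrunc (L t i) k (b i)) with hF
  set F' : ℝ → PiLp 1 (fun _ : ι → Fin (k + 1) => ℝ) :=
    fun t => WithLp.toLp 1 (fun b => ∑ i, (mu i - lam i) * poisQ (L t i) k (b i) *
      ∏ j ∈ Finset.univ.erase i, poisTrunc (L t j) k (b j)) with hF'
  have hzero : ∑ i, (mu i - lam i) = 0 := by
    rw [Finset.sum_sub_distrib]; rw [hsum]; ring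
  -- componentwise derivative
  have hderiv : ∀ t, ∀ b : ι → Fin (k + 1),
      HasDerivAt (fun t => ∏ i, poisTrunc (L t i) k (b i)) (F' t b) t := by
    intro t b
    have hfac : ∀ i : ι, HasDerivAt (fun t => poisTrunc (L t i) k (b i))
        ((poisQ (L t i) k (b i) - poisTrunc (L t i) k (b i)) * (mu i - lam i)) t := by
      intro i
      have hLd : HasDerivAt (fun t => L t i) (mu i - lam i) t := by
        have := ((hasDerivAt_id t).mul_const (mu i - lam i)).const_add (lam i)
        simpa [hLdef] using this
      have := (hasDerivAt_poisTrunc k hk (b i) (L t i)).comp t hLd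
      exact this
    have h1 := HasDerivAt.fun_finsetProd (u := Finset.univ)
      (f := fun (i : ι) (t : ℝ) => poisTrunc (L t i) k (b i)) (fun i _ => hfac i)
    refine h1.congr_deriv ?_
    have hexp : ∀ i ∈ Finset.univ, (∏ j ∈ Finset.univ.erase i, poisTrunc (L t j) k (b j)) •
          ((poisQ (L t i) k (b i) - poisTrunc (L t i) k (b i)) * (mu i - lam i))
        = (mu i - lam i) * poisQ (L t i) k (b i) *
            ∏ j ∈ Finset.univ.erase i, poisTrunc (L t j) k (b j)
          - (mu i - lam i) * ∏ j, poisTrunc (L t j) k (b j) := by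
      intro i _
      rw [smul_eq_mul, ← Finset.mul_prod_erase Finset.univ
        (fun j => poisTrunc (L t j) k (b j)) (Finset.mem_univ i)]
      ring
    rw [Finset.sum_congr rfl hexp, Finset.sum_sub_distrib, ← Finset.sum_mul, hzero, zero_mul,
      sub_zero]
  -- derivative of the `PiLp`-valued function
  have hE : ∀ t, HasDerivAt F (F' t) t := by
    intro t
    have h := hasDerivAt_pi.mpr (fun b : ι → Fin (k + 1) => hderiv t b)
    have h2 := ((PiLp.continuousLinearEquiv 1 ℝ
        (fun _ : ι → Fin (k + 1) => ℝ)).symm.toContinuousLinearMap.hasFDerivAt).comp_hasDerivAt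
        t h
    exact h2
  -- norm computations
  have hnorm : ∀ v : PiLp 1 (fun _ : ι → Fin (k + 1) => ℝ), ‖v‖ = ∑ b, |v b| := by
    intro v
    rw [PiLp.norm_eq_sum (by norm_num : 0 < (1 : ENNReal).toReal)]
    simp [Real.norm_eq_abs]
  -- the bound on the derivative
  have hbound : ∀ t ∈ Set.Icc (0 : ℝ) 1, ‖F' t‖ ≤ ∑ i, |mu i - lam i| := by
    intro t ht
    rw [hnorm]
    have hfactor : ∀ i : ι, ∑ b : ι → Fin (k + 1),
        poisQ (L t i) k (b i) * ∏ j ∈ Finset.univ.erase i, poisTrunc (L t j) k (b j) = 1 := by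
      intro i
      set g : ι → Fin (k + 1) → ℝ := fun j u =>
        if j = i then poisQ (L t i) k (u : ℕ) else poisTrunc (L t j) k (u : ℕ) with hg
      have h1 : ∀ b : ι → Fin (k + 1),
          poisQ (L t i) k (b i) * ∏ j ∈ Finset.univ.erase i, poisTrunc (L t j) k (b j)
          = ∏ j, g j (b j) := by
        intro b
        rw [← Finset.mul_prod_erase Finset.univ (fun j => g j (b j)) (Finset.mem_univ i)]
        congr 1
        · simp [hg]
        · exact Finset.prod_congr rfl fun j hj => by
            simp [hg, (Finset.mem_erase.mp hj).1]
      have hps := Finset.prod_univ_sum (κ := fun _ : ι => Fin (k + 1))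
        (fun _ => Finset.univ) g
      rw [Fintype.piFinset_univ] at hps
      rw [Finset.sum_congr rfl (fun b _ => h1 b), ← hps]
      have h2 : ∀ j : ι, (∑ u : Fin (k + 1), g j u) = 1 := by
        intro j
        by_cases hj : j = i
        · subst hj; simp only [hg, if_pos rfl]; exact sum_poisQ _ hk
        · simp only [hg, if_neg hj]; exact sum_poisTrunc _ _
      rw [Finset.prod_congr rfl fun j _ => h2 j, Finset.prod_const_one]
    calc ∑ b, |F' t b|
        ≤ ∑ b : ι → Fin (k + 1), ∑ i, |mu i - lam i| *
            (poisQ (L t i) k (b i) * ∏ j ∈ Finset.univ.erase i, poisTrunc (L t j) k (b j)) := by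
          refine Finset.sum_le_sum fun b _ => ?_
          refine (Finset.abs_sum_le_sum_abs _ _).trans ?_
          refine Finset.sum_le_sum fun i _ => le_of_eq ?_
          rw [abs_mul, abs_mul,
            abs_of_nonneg (poisQ_nonneg (hLmem t ht i) k _),
            abs_of_nonneg (Finset.prod_nonneg fun j _ =>
              poisTrunc_nonneg (hLmem t ht j) k _)]
          ring
      _ = ∑ i, |mu i - lam i| * ∑ b : ι → Fin (k + 1),
            (poisQ (L t i) k (b i) * ∏ j ∈ Finset.univ.erase i, poisTrunc (L t j) k (b j)) := by
          rw [Finset.sum_comm]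
          exact Finset.sum_congr rfl fun i _ => by rw [Finset.mul_sum]
      _ = ∑ i, |mu i - lam i| := by
          exact Finset.sum_congr rfl fun i _ => by rw [hfactor i, mul_one]
  -- mean value inequality
  have hmvt := Convex.norm_image_sub_le_of_norm_hasDerivWithin_le
    (f := F) (f' := F') (s := Set.Icc (0 : ℝ) 1)
    (fun t ht => (hE t).hasDerivWithinAt) hbound (convex_Icc 0 1)
    (Set.left_mem_Icc.mpr zero_le_one) (Set.right_mem_Icc.mpr zero_le_one)
  have h10 : ‖F 1 - F 0‖ = ∑ b : ι → Fin (k + 1),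
      |(∏ i, poisTrunc (mu i) k (b i)) - ∏ i, poisTrunc (lam i) k (b i)| := by
    rw [hnorm]
    refine Finset.sum_congr rfl fun b _ => ?_
    have : (F 1 - F 0) b = F 1 b - F 0 b := rfl
    rw [this, hF]
    simp only [hL0, hL1]
  rw [h10] at hmvt
  simpa using hmvt

lemma psiMap_mem_simplexD (k : ℕ) [Fintype (TreeClass k)] {c : ℝ} (hc : 0 ≤ c)
    {x : TreeClass k → ℝ} (hx : x ∈ simplexD k) : PsiMap k c x ∈ simplexD k := by
  classical
  constructor
  · intro j
    refine Finset.sum_nonneg fun b _ => ?_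
    split
    · exact Finset.prod_nonneg fun i _ => poisTrunc_nonneg (mul_nonneg hc (hx.1 i)) k _
    · exact le_refl 0
  · unfold PsiMap
    rw [Finset.sum_comm]
    have h1 : ∀ b : TreeClass k → Fin (k + 1),
        (∑ j, if recursionFun k (fun i => ((b i : ℕ))) = j
            then ∏ i, poisTrunc (c * x i) k (b i) else 0)
          = ∏ i, poisTrunc (c * x i) k (b i) := by
      intro b
      rw [Finset.sum_ite_eq, if_pos (Finset.mem_univ _)]
    have hps := Finset.prod_univ_sum (κ := fun _ : TreeClass k => Fin (k + 1))
      (fun _ => Finset.univ) (fun i u => poisTrunc (c * x i) k (u : ℕ))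
    rw [Fintype.piFinset_univ] at hps
    rw [Finset.sum_congr rfl fun b _ => h1 b, ← hps]
    rw [Finset.prod_congr rfl fun i _ => sum_poisTrunc (c * x i) k, Finset.prod_const_one]

lemma psiMap_l1_contract (k : ℕ) (hk : 0 < k) [Fintype (TreeClass k)] {c : ℝ} (hc : 0 ≤ c)
    {x y : TreeClass k → ℝ} (hx : x ∈ simplexD k) (hy : y ∈ simplexD k) :
    ∑ j, |PsiMap k c x j - PsiMap k c y j| ≤ c * ∑ j, |x j - y j| := by
  classical
  have key := prod_poisTrunc_l1_le (ι := TreeClass k) k hk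
    (fun i => c * y i) (fun i => c * x i)
    (fun i => mul_nonneg hc (hy.1 i)) (fun i => mul_nonneg hc (hx.1 i))
    (by rw [← Finset.mul_sum, ← Finset.mul_sum, hx.2, hy.2])
  have h1 : ∑ j, |PsiMap k c x j - PsiMap k c y j|
      ≤ ∑ b : TreeClass k → Fin (k + 1),
        |(∏ i, poisTrunc (c * x i) k (b i)) - ∏ i, poisTrunc (c * y i) k (b i)| := by
    have hstep : ∀ j, |PsiMap k c x j - PsiMap k c y j| ≤
        ∑ b : TreeClass k → Fin (k + 1),
          (if recursionFun k (fun i => ((b i : ℕ))) = j then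
            |(∏ i, poisTrunc (c * x i) k (b i)) - ∏ i, poisTrunc (c * y i) k (b i)| else 0) := by
      intro j
      unfold PsiMap
      rw [← Finset.sum_sub_distrib]
      refine (Finset.abs_sum_le_sum_abs _ _).trans (le_of_eq ?_)
      refine Finset.sum_congr rfl fun b _ => ?_
      split
      · rfl
      · simp
    calc ∑ j, |PsiMap k c x j - PsiMap k c y j|
        ≤ ∑ j, ∑ b : TreeClass k → Fin (k + 1),
          (if recursionFun k (fun i => ((b i : ℕ))) = j then
            |(∏ i, poisTrunc (c * x i) k (b i)) - ∏ i, poisTrunc (c * y i) k (b i)| else 0) :=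
          Finset.sum_le_sum fun j _ => hstep j
      _ = ∑ b : TreeClass k → Fin (k + 1), ∑ j,
          (if recursionFun k (fun i => ((b i : ℕ))) = j then
            |(∏ i, poisTrunc (c * x i) k (b i)) - ∏ i, poisTrunc (c * y i) k (b i)| else 0) :=
          Finset.sum_comm
      _ = ∑ b : TreeClass k → Fin (k + 1),
          |(∏ i, poisTrunc (c * x i) k (b i)) - ∏ i, poisTrunc (c * y i) k (b i)| := by
          refine Finset.sum_congr rfl fun b _ => ?_
          rw [Finset.sum_ite_eq, if_pos (Finset.mem_univ _)]
  refine h1.trans (key.trans (le_of_eq ?_))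
  rw [Finset.mul_sum]
  exact Finset.sum_congr rfl fun i _ => by
    rw [← mul_sub, abs_mul, abs_of_nonneg hc]

lemma psiMap_iterate_mem (k : ℕ) [Fintype (TreeClass k)] {c : ℝ} (hc : 0 ≤ c)
    {x : TreeClass k → ℝ} (hx : x ∈ simplexD k) (s : ℕ) :
    (PsiMap k c)^[s] x ∈ simplexD k := by
  induction s with
  | zero => exact hx
  | succ s ih =>
    rw [Function.iterate_succ_apply']
    exact psiMap_mem_simplexD k hc ih

lemma psiMap_iterate_l1 (k : ℕ) (hk : 0 < k) [Fintype (TreeClass k)] {c : ℝ} (hc : 0 ≤ c)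
    {x y : TreeClass k → ℝ} (hx : x ∈ simplexD k) (hy : y ∈ simplexD k) (s : ℕ) :
    ∑ j, |(PsiMap k c)^[s] x j - (PsiMap k c)^[s] y j| ≤ c ^ s * ∑ j, |x j - y j| := by
  induction s with
  | zero => simp
  | succ s ih =>
    rw [Function.iterate_succ_apply', Function.iterate_succ_apply']
    calc ∑ j, |PsiMap k c ((PsiMap k c)^[s] x) j - PsiMap k c ((PsiMap k c)^[s] y) j|
        ≤ c * ∑ j, |(PsiMap k c)^[s] x j - (PsiMap k c)^[s] y j| :=
          psiMap_l1_contract k hk hc (psiMap_iterate_mem k hc hx s)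
            (psiMap_iterate_mem k hc hy s)
      _ ≤ c * (c ^ s * ∑ j, |x j - y j|) := mul_le_mul_of_nonneg_left ih hc
      _ = c ^ (s + 1) * ∑ j, |x j - y j| := by ring

lemma euclDist_le_l1 {ι : Type*} [Fintype ι] (x y : ι → ℝ) :
    euclDist x y ≤ ∑ j, |x j - y j| := by
  unfold euclDist
  have h1 : ∑ j, (x j - y j) ^ 2 ≤ (∑ j, |x j - y j|) ^ 2 := by
    have := Finset.sum_sq_le_sq_sum_of_nonneg
      (f := fun j => |x j - y j|) (s := Finset.univ) (fun j _ => abs_nonneg _)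
    simpa [sq_abs] using this
  calc Real.sqrt (∑ j, (x j - y j) ^ 2) ≤ Real.sqrt ((∑ j, |x j - y j|) ^ 2) :=
        Real.sqrt_le_sqrt h1
    _ = ∑ j, |x j - y j| := Real.sqrt_sq (Finset.sum_nonneg fun j _ => abs_nonneg _)

lemma l1_le_sqrt_card_mul_euclDist {ι : Type*} [Fintype ι] (x y : ι → ℝ) :
    ∑ j, |x j - y j| ≤ Real.sqrt (Fintype.card ι) * euclDist x y := by
  unfold euclDist
  have h1 : (∑ j, |x j - y j|) ^ 2 ≤ (Fintype.card ι : ℝ) * ∑ j, (x j - y j) ^ 2 := by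
    have := sq_sum_le_card_mul_sum_sq
      (s := Finset.univ) (f := fun j => |x j - y j|)
    simpa [sq_abs, Finset.card_univ] using this
  have h2 : ∑ j, |x j - y j| = Real.sqrt ((∑ j, |x j - y j|) ^ 2) :=
    (Real.sqrt_sq (Finset.sum_nonneg fun j _ => abs_nonneg _)).symm
  rw [h2]
  calc Real.sqrt ((∑ j, |x j - y j|) ^ 2)
      ≤ Real.sqrt ((Fintype.card ι : ℝ) * ∑ j, (x j - y j) ^ 2) := Real.sqrt_le_sqrt h1
    _ = Real.sqrt (Fintype.card ι) * Real.sqrt (∑ j, (x j - y j) ^ 2) :=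
        Real.sqrt_mul (by positivity) _

/-- **Theorem (subcritical contraction in the Euclidean metric).**
Fix a positive integer `k`.  For every `c` with `0 < c < 1` there exist a positive
integer `s` and a real `α < 1` such that for all `x⃗, y⃗ ∈ D`,
`ρ(Ψ_c^s(x⃗), Ψ_c^s(y⃗)) ≤ α · ρ(x⃗, y⃗)`, where `ρ` is the Euclidean metric on `ℝ^m`
and `Ψ_c^s` is the `s`-fold iterate of `Ψ_c`.  In fact one may take any `s` with
`2·c^s·√m < 1`, together with `α = 2·c^s·√m`. -/
theorem eucl_contraction_subcritical (k : ℕ) (hk : 0 < k) [Fintype (TreeClass k)]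
    (c : ℝ) (hc0 : 0 < c) (hc1 : c < 1) :
    (∃ s : ℕ, 0 < s ∧ ∃ α : ℝ, α < 1 ∧ ∀ x ∈ simplexD k, ∀ y ∈ simplexD k,
        euclDist ((PsiMap k c)^[s] x) ((PsiMap k c)^[s] y) ≤ α * euclDist x y) ∧
      ∀ s : ℕ, 2 * c ^ s * Real.sqrt (Fintype.card (TreeClass k)) < 1 →
        ∀ x ∈ simplexD k, ∀ y ∈ simplexD k,
          euclDist ((PsiMap k c)^[s] x) ((PsiMap k c)^[s] y) ≤
            2 * c ^ s * Real.sqrt (Fintype.card (TreeClass k)) * euclDist x y := by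
  have hc0' : (0 : ℝ) ≤ c := hc0.le
  set m : ℝ := Real.sqrt (Fintype.card (TreeClass k)) with hm
  have hm0 : 0 ≤ m := Real.sqrt_nonneg _
  have main : ∀ s : ℕ, 2 * c ^ s * m < 1 →
      ∀ x ∈ simplexD k, ∀ y ∈ simplexD k,
        euclDist ((PsiMap k c)^[s] x) ((PsiMap k c)^[s] y) ≤
          2 * c ^ s * m * euclDist x y := by
    intro s _ x hx y hy
    have hcs : (0 : ℝ) ≤ c ^ s := pow_nonneg hc0' s
    have hd : 0 ≤ euclDist x y := Real.sqrt_nonneg _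
    calc euclDist ((PsiMap k c)^[s] x) ((PsiMap k c)^[s] y)
        ≤ ∑ j, |(PsiMap k c)^[s] x j - (PsiMap k c)^[s] y j| := euclDist_le_l1 _ _
      _ ≤ c ^ s * ∑ j, |x j - y j| := psiMap_iterate_l1 k hk hc0' hx hy s
      _ ≤ c ^ s * (m * euclDist x y) :=
          mul_le_mul_of_nonneg_left (l1_le_sqrt_card_mul_euclDist x y) hcs
      _ = c ^ s * m * euclDist x y := by ring
      _ ≤ 2 * c ^ s * m * euclDist x y := by
          nlinarith [mul_nonneg (mul_nonneg hcs hm0) hd]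
  refine ⟨?_, main⟩
  have htend : Filter.Tendsto (fun s : ℕ => 2 * c ^ s * m) Filter.atTop (nhds 0) := by
    have h1 := tendsto_pow_atTop_nhds_zero_of_lt_one hc0' hc1
    have h2 := (h1.const_mul (2 : ℝ)).mul_const m
    simpa using h2
  have hev : ∀ᶠ s : ℕ in Filter.atTop, 2 * c ^ s * m < 1 :=
    htend.eventually_lt_const one_pos
  obtain ⟨s, hs1, hs2⟩ := (hev.and (Filter.eventually_gt_atTop 0)).exists
  exact ⟨s, hs2, 2 * c ^ s * m, hs1, main s hs1⟩

end RTree
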